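/- In the ring of 3×3 real matrices, let x_1(a) = I + a·E_{12} and x_2(a) = I + a·E_{23}. Then the map (a, b) ↦ x_2(b)·x_1(a)·x_1(a)·x_2(b) is a bijection from ℝ_{>0} × ℝ_{>0} onto the set of upper unitriangular 3×3 real matrices u with u_{12} > 0, u_{23} > 0 and 2·u_{13} = u_{12}·u_{23}. -/

import Mathlib

/-- The Chevalley generator `x₁(a) = I + a·E₁₂` of the upper unitriangular subgroup of `SL₃(ℝ)`. -/
def x1 (a : ℝ) : Matrix (Fin 3) (Fin 3) ℝ := !![1, a, 0; 0, 1, 0; 0, 0, 1]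

/-- The Chevalley generator `x₂(a) = I + a·E₂₃` of the upper unitriangular subgroup of `SL₃(ℝ)`. -/
def x2 (a : ℝ) : Matrix (Fin 3) (Fin 3) ℝ := !![1, 0, 0; 0, 1, a; 0, 0, 1]

lemma prod_eq (a b : ℝ) : x2 b * x1 a * x1 a * x2 b =
    !![1, 2*a, 2*a*b; 0, 1, 2*b; 0, 0, 1] := by
  simp [x1, x2, Matrix.mul_fin_three]
  ring_nf
  simp

/-- Lusztig 2.4(a) for type `A₂`, trivial diagram involution, `w = w₀`: the map
`(a, b) ↦ x₂(b)x₁(a)x₁(a)x₂(b)` is a bijection from `ℝ_{>0} × ℝ_{>0}` onto the set of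
upper unitriangular matrices `u` with `u₁₂ > 0`, `u₂₃ > 0` and `2u₁₃ = u₁₂·u₂₃`. -/
theorem top_cell_parametrization :
    Set.BijOn (fun p : ℝ × ℝ => x2 p.2 * x1 p.1 * x1 p.1 * x2 p.2)
      (Set.Ioi 0 ×ˢ Set.Ioi 0)
      {u : Matrix (Fin 3) (Fin 3) ℝ |
        u 0 0 = 1 ∧ u 1 1 = 1 ∧ u 2 2 = 1 ∧ u 1 0 = 0 ∧ u 2 0 = 0 ∧ u 2 1 = 0 ∧
        0 < u 0 1 ∧ 0 < u 1 2 ∧ 2 * u 0 2 = u 0 1 * u 1 2} := by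
  refine ⟨?_, ?_, ?_⟩
  · rintro ⟨a, b⟩ ⟨ha, hb⟩
    simp only [prod_eq]
    refine ⟨rfl, rfl, rfl, rfl, rfl, rfl, ?_, ?_, ?_⟩ <;>
      simp_all [Set.mem_Ioi] <;> ring_nf <;> positivity
  · rintro ⟨a, b⟩ _ ⟨c, d⟩ _ h
    simp only [prod_eq] at h
    have h1 := congrFun (congrFun h 0) 1
    have h2 := congrFun (congrFun h 1) 2
    simp at h1 h2
    exact Prod.ext (by linarith) (by linarith)
  · rintro u ⟨h00, h11, h22, h10, h20, h21, h01, h12, h02⟩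
    refine ⟨(u 0 1 / 2, u 1 2 / 2), ⟨by simpa using half_pos h01, by simpa using half_pos h12⟩, ?_⟩
    simp only [prod_eq]
    ext i j
    fin_cases i <;> fin_cases j <;>
      simp_all [Matrix.vecHead, Matrix.vecTail] <;> nlinarith [h02]
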